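/- Let S be a compact metric space, Φ : [0,∞) × S → S a continuous semiflow, and A ⊆ S a compact asymptotically stable set for Φ with basin of attraction B(A) := {x ∈ S : dist(Φ(t,x), A) → 0 as t → ∞}. Then there exists a compact neighborhood V of A in S with V ⊆ B(A) and Φ(t,V) ⊆ interior(V) for all t > 0, such that V is a strong deformation retract of B(A): there is a continuous map H : [0,1] × B(A) → B(A) with H(0,x) = x for all x, H(1,x) ∈ V for all x, and H(s,x) = x for all s ∈ [0,1] and x ∈ V. -/

import Mathlib

open Set Filter Topology MeasureTheory

/-- **A compact attracting neighborhood is a strong deformation retract of the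
basin of attraction.**  If `A` is a compact asymptotically stable set for a
continuous semiflow `Φ` on a compact metric space `S`, with basin of
attraction `B(A)`, then there is a compact neighborhood `V` of `A` with
`V ⊆ B(A)` and `Φ(t,V) ⊆ interior V` for all `t > 0`, such that `V` is a
strong deformation retract of `B(A)`. -/
theorem attracting_nbhd_strong_deformation_retract_of_basin
    {S : Type*} [MetricSpace S] [CompactSpace S]
    (Φ : ℝ → S → S)
    (hΦ_cont : ContinuousOn (fun p : ℝ × S => Φ p.1 p.2)
      (Set.Ici (0 : ℝ) ×ˢ (Set.univ : Set S)))
    (hΦ_zero : ∀ x : S, Φ 0 x = x)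
    (hΦ_semigroup : ∀ t s : ℝ, 0 ≤ t → 0 ≤ s → ∀ x : S,
      Φ (t + s) x = Φ t (Φ s x))
    (A : Set S) (hA : IsCompact A)
    -- (i) stability
    (hstab : ∀ U : Set S, IsOpen U → A ⊆ U →
      ∃ W : Set S, IsOpen W ∧ A ⊆ W ∧ ∀ x ∈ W, ∀ t : ℝ, 0 ≤ t → Φ t x ∈ U)
    -- (ii) local attractivity
    (hattr : ∃ W₀ : Set S, IsOpen W₀ ∧ A ⊆ W₀ ∧ ∀ x ∈ W₀,
      Tendsto (fun t : ℝ => Metric.infDist (Φ t x) A) atTop (𝓝 0))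
    -- the basin of attraction of `A`
    (B : Set S)
    (hB : B = {x : S | Tendsto (fun t : ℝ => Metric.infDist (Φ t x) A)
      atTop (𝓝 0)}) :
    ∃ V : Set S, IsCompact V ∧ A ⊆ interior V ∧ V ⊆ B ∧
      (∀ t : ℝ, 0 < t → ∀ x ∈ V, Φ t x ∈ interior V) ∧
      ∃ H : ℝ → S → S,
        ContinuousOn (fun p : ℝ × S => H p.1 p.2) (Set.Icc (0 : ℝ) 1 ×ˢ B) ∧
        (∀ s ∈ Set.Icc (0 : ℝ) 1, ∀ x ∈ B, H s x ∈ B) ∧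
        (∀ x ∈ B, H 0 x = x) ∧
        (∀ x ∈ B, H 1 x ∈ V) ∧
        (∀ s ∈ Set.Icc (0 : ℝ) 1, ∀ x ∈ V, H s x = x) := by
  classical
  -- trivial case : `A = ∅`
  rcases A.eq_empty_or_nonempty with rfl | ⟨a₀, ha₀⟩
  · have hBuniv : B = univ := by
      rw [hB]; ext x; simp [Metric.infDist_empty, tendsto_const_nhds]
    refine ⟨univ, isCompact_univ, by simp, by simp [hBuniv], by simp, fun _ x => x, ?_, ?_, ?_, ?_, ?_⟩
    · exact continuous_snd.continuousOn
    · simp [hBuniv]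
    · simp
    · simp
    · simp
  -- the modified flow, continuous on all of `ℝ × S`
  set φ : ℝ → S → S := fun t x => Φ (max t 0) x with hφdef
  have hφ_eq : ∀ t : ℝ, 0 ≤ t → ∀ x, φ t x = Φ t x := by
    intro t ht x; simp [hφdef, max_eq_left ht]
  have hφ_cont : Continuous fun p : ℝ × S => φ p.1 p.2 := by
    have hmap : MapsTo (fun p : ℝ × S => (max p.1 0, p.2)) univ
        (Ici (0:ℝ) ×ˢ (univ : Set S)) := fun p _ => ⟨(le_max_right p.1 0 : (0:ℝ) ≤ max p.1 0), mem_univ _⟩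
    have := hΦ_cont.comp
      (((continuous_fst.max continuous_const).prodMk continuous_snd).continuousOn) hmap
    rw [← continuousOn_univ]; exact this
  have hφ0 : ∀ x, φ 0 x = x := by intro x; rw [hφ_eq 0 le_rfl]; exact hΦ_zero x
  have hφ_add : ∀ t s : ℝ, 0 ≤ t → 0 ≤ s → ∀ x, φ (t + s) x = φ t (φ s x) := by
    intro t s ht hs x
    rw [hφ_eq _ (add_nonneg ht hs), hφ_eq _ ht, hφ_eq _ hs]
    exact hΦ_semigroup t s ht hs x
  have hφc1 : ∀ t : ℝ, Continuous (φ t) := by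
    intro t
    exact hφ_cont.comp (continuous_const.prodMk continuous_id)
  have hφcx : ∀ x : S, Continuous (fun t => φ t x) := by
    intro x
    exact hφ_cont.comp (continuous_id.prodMk continuous_const)
  have hdist_cont : Continuous (fun y : S => Metric.infDist y A) :=
    Metric.continuous_infDist_pt A
  -- membership in B in terms of φ
  have hBmem : ∀ x : S, x ∈ B ↔
      Tendsto (fun t : ℝ => Metric.infDist (φ t x) A) atTop (𝓝 0) := by
    intro x
    rw [hB]; simp only [mem_setOf_eq]
    constructor <;> intro hx
    · refine hx.congr' ?_
      filter_upwards [eventually_ge_atTop (0:ℝ)] with t ht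
      rw [hφ_eq t ht]
    · refine hx.congr' ?_
      filter_upwards [eventually_ge_atTop (0:ℝ)] with t ht
      rw [hφ_eq t ht]
  -- A is forward invariant
  have hstabφ : ∀ U : Set S, IsOpen U → A ⊆ U →
      ∃ W : Set S, IsOpen W ∧ A ⊆ W ∧ ∀ x ∈ W, ∀ t : ℝ, 0 ≤ t → φ t x ∈ U := by
    intro U hU hAU
    obtain ⟨W, hWo, hAW, hWU⟩ := hstab U hU hAU
    exact ⟨W, hWo, hAW, fun x hx t ht => by rw [hφ_eq t ht]; exact hWU x hx t ht⟩
  have hA_inv : ∀ a ∈ A, ∀ t : ℝ, 0 ≤ t → φ t a ∈ A := by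
    intro a ha t ht
    rw [hA.isClosed.mem_iff_infDist_zero ⟨a₀, ha₀⟩]
    have hnn := Metric.infDist_nonneg (x := φ t a) (s := A)
    by_contra hne
    have hpos : 0 < Metric.infDist (φ t a) A := lt_of_le_of_ne hnn (Ne.symm hne)
    set ε := Metric.infDist (φ t a) A
    obtain ⟨W, hWo, hAW, hWU⟩ := hstabφ {y | Metric.infDist y A < ε}
      (isOpen_lt hdist_cont continuous_const)
      (fun y hy => by simp [Metric.infDist_zero_of_mem hy, hpos])
    exact absurd (hWU a (hAW ha) t ht) (by simp; exact le_rfl)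
  -- key lemma : orbits from points of B eventually enter any neighborhood of A,
  -- locally uniformly
  have hkey : ∀ x ∈ B, ∀ U : Set S, IsOpen U → A ⊆ U →
      ∃ T : ℝ, 0 ≤ T ∧ ∃ N : Set S, IsOpen N ∧ x ∈ N ∧
        ∀ y ∈ N, ∀ t : ℝ, T ≤ t → φ t y ∈ U := by
    intro x hx U hU hAU
    obtain ⟨W, hWo, hAW, hWU⟩ := hstabφ U hU hAU
    obtain ⟨r, hr, hrW⟩ := hA.exists_thickening_subset_open hWo hAW
    have hxB := (hBmem x).1 hx
    have : ∀ᶠ t in atTop, Metric.infDist (φ t x) A < r :=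
      hxB.eventually (gt_mem_nhds hr) |>.mono (fun t h => h)
    obtain ⟨T₀, hT₀⟩ := this.exists_forall_of_atTop
    set T := max T₀ 0 with hTdef
    have hTnn : (0:ℝ) ≤ T := le_max_right _ _
    have hTW : φ T x ∈ W := hrW ((Metric.mem_thickening_iff_infDist_lt ⟨a₀, ha₀⟩).2
      (hT₀ T (le_max_left _ _)))
    set N := (φ T) ⁻¹' W with hNdef
    refine ⟨T, hTnn, N, hWo.preimage (hφc1 T), hTW, ?_⟩
    intro y hy t htT
    have h1 : φ t y = φ (t - T) (φ T y) := by
      rw [← hφ_add _ _ (by linarith) hTnn, sub_add_cancel]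
    rw [h1]
    exact hWU _ hy _ (by linarith)
  -- B is open, invariant, contains A
  have hB_inv : ∀ x ∈ B, ∀ s : ℝ, 0 ≤ s → φ s x ∈ B := by
    intro x hx s hs
    rw [hBmem]
    have h1 : Tendsto (fun t : ℝ => Metric.infDist (φ (t + s) x) A) atTop (𝓝 0) :=
      ((hBmem x).1 hx).comp (tendsto_atTop_add_const_right atTop s tendsto_id)
    refine h1.congr' ?_
    filter_upwards [eventually_ge_atTop (0:ℝ)] with t ht
    rw [hφ_add t s ht hs]
  have hattrφ : ∀ z, (∃ W₀ : Set S, IsOpen W₀ ∧ A ⊆ W₀ ∧ z ∈ W₀ ∧ ∀ x ∈ W₀,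
      Tendsto (fun t : ℝ => Metric.infDist (Φ t x) A) atTop (𝓝 0)) → z ∈ B := by
    intro z ⟨W₀, _, _, hzW, hW⟩
    rw [hB]; exact hW z hzW
  have hB_open : IsOpen B := by
    rw [isOpen_iff_mem_nhds]
    intro x hx
    obtain ⟨W₀, hW₀o, hAW₀, hW₀⟩ := hattr
    obtain ⟨T, hT0, N, hNo, hxN, hN⟩ := hkey x hx W₀ hW₀o hAW₀
    refine mem_nhds_iff.2 ⟨N, ?_, hNo, hxN⟩
    intro y hy
    have hTy : φ T y ∈ B := hattrφ _ ⟨W₀, hW₀o, hAW₀, hN y hy T le_rfl, hW₀⟩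
    rw [hBmem]
    have h1 : Tendsto (fun t : ℝ => Metric.infDist (φ (t - T) (φ T y)) A) atTop (𝓝 0) :=
      ((hBmem _).1 hTy).comp (tendsto_atTop_add_const_right atTop (-T)
        tendsto_id |>.congr (fun t => (sub_eq_add_neg t T).symm))
    refine h1.congr' ?_
    filter_upwards [eventually_ge_atTop T] with t ht
    rw [← hφ_add _ _ (by linarith) hT0, sub_add_cancel]
  have hA_sub_B : A ⊆ B := by
    intro a ha
    rw [hBmem]
    refine tendsto_const_nhds.congr' ?_
    filter_upwards [eventually_ge_atTop (0:ℝ)] with t ht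
    rw [Metric.infDist_zero_of_mem (hA_inv a ha t ht)]
  -- the function g : pointwise supremum of infDist along the orbit
  obtain ⟨M, hM⟩ : ∃ M : ℝ, ∀ y : S, Metric.infDist y A ≤ M := by
    refine ⟨Metric.diam (univ : Set S), fun y => ?_⟩
    exact le_trans (Metric.infDist_le_dist_of_mem ha₀)
      (Metric.dist_le_diam_of_mem isCompact_univ.isBounded (mem_univ _) (mem_univ _))
  set g : S → ℝ := fun x => ⨆ t : ℝ, Metric.infDist (φ t x) A with hgdef
  have hg_bdd : ∀ x : S, BddAbove (range fun t : ℝ => Metric.infDist (φ t x) A) :=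
    fun x => ⟨M, by rintro r ⟨t, rfl⟩; exact hM _⟩
  have hg_le : ∀ x (t : ℝ), Metric.infDist (φ t x) A ≤ g x :=
    fun x t => le_ciSup (hg_bdd x) t
  have hg_le0 : ∀ x, Metric.infDist x A ≤ g x := by
    intro x; have := hg_le x 0; rwa [hφ0] at this
  have hg_nonneg : ∀ x, 0 ≤ g x :=
    fun x => le_trans Metric.infDist_nonneg (hg_le0 x)
  have hφ_max : ∀ (t : ℝ) (x : S), φ t x = φ (max t 0) x := by
    intro t x
    simp only [hφdef]
    rw [max_eq_left (le_max_right t 0)]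
  have hg_mono : ∀ x, ∀ s : ℝ, 0 ≤ s → g (φ s x) ≤ g x := by
    intro x s hs
    refine ciSup_le fun t => ?_
    rw [hφ_max t (φ s x), ← hφ_add _ _ (le_max_right t 0) hs]
    exact hg_le x _
  have hgA : ∀ a ∈ A, g a = 0 := by
    intro a ha
    refine le_antisymm (ciSup_le fun t => ?_) (hg_nonneg a)
    rw [hφ_max t a, Metric.infDist_zero_of_mem (hA_inv a ha _ (le_max_right t 0))]
  have hgx0 : ∀ x, g x = 0 → x ∈ A := by
    intro x hgx
    rw [hA.isClosed.mem_iff_infDist_zero ⟨a₀, ha₀⟩]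
    exact le_antisymm (hgx ▸ hg_le0 x) Metric.infDist_nonneg
  -- tail of g along orbits tends to 0
  have hg_tail : ∀ x ∈ B, ∀ ε : ℝ, 0 < ε → ∃ T : ℝ, 0 ≤ T ∧
      ∀ t : ℝ, T ≤ t → g (φ t x) ≤ ε := by
    intro x hx ε hε
    obtain ⟨T, hT0, N, hNo, hxN, hN⟩ := hkey x hx {y | Metric.infDist y A < ε}
      (isOpen_lt hdist_cont continuous_const)
      (fun y hy => by simp [Metric.infDist_zero_of_mem hy, hε])
    refine ⟨T, hT0, fun t ht => ?_⟩
    refine ciSup_le fun u => ?_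
    rw [hφ_max u (φ t x), ← hφ_add _ _ (le_max_right u 0) (by linarith)]
    exact le_of_lt (hN x hxN _ (by have := le_max_right u 0; linarith))
  -- continuity of g on B
  have hg_cont : ∀ x ∈ B, ContinuousAt g x := by
    intro x hx
    rw [ContinuousAt, Metric.tendsto_nhds]
    intro ε hε
    obtain ⟨T, hT0, N, hNo, hxN, hN⟩ := hkey x hx {y | Metric.infDist y A < ε/4}
      (isOpen_lt hdist_cont continuous_const)
      (fun y hy => by simp [Metric.infDist_zero_of_mem hy]; positivity)
    -- tube lemma around the compact time interval [0, T]
    set D : ℝ × S → ℝ := fun p => dist (φ p.1 p.2) (φ p.1 x) with hDdef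
    have hDc : Continuous D :=
      Continuous.dist hφ_cont (hφ_cont.comp (continuous_fst.prodMk continuous_const))
    have hsub : Icc (0:ℝ) T ×ˢ ({x} : Set S) ⊆ D ⁻¹' Iio (ε/4) := by
      rintro ⟨t, y⟩ ⟨-, hy⟩
      simp only [mem_singleton_iff] at hy
      subst hy
      simp only [mem_preimage, hDdef, mem_Iio, dist_self]
      positivity
    obtain ⟨u, v, huo, hvo, hsu, htv, huv⟩ := generalized_tube_lemma isCompact_Icc
      isCompact_singleton (hDc.isOpen_preimage _ isOpen_Iio) hsub
    have hDlt : ∀ y ∈ v, ∀ t : ℝ, max t 0 ≤ T → dist (φ t y) (φ t x) < ε/4 := by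
      intro y hy t htT
      have hmem : (max t 0, y) ∈ u ×ˢ v :=
        ⟨hsu ⟨le_max_right t 0, htT⟩, hy⟩
      have := huv hmem
      simp only [mem_preimage, hDdef, mem_Iio] at this
      rwa [hφ_max t y, hφ_max t x]
    filter_upwards [hNo.mem_nhds hxN, hvo.mem_nhds (htv rfl)] with y h1 h2
    have hub1 : g y ≤ g x + ε/2 := by
      refine ciSup_le fun t => ?_
      rcases le_or_gt (max t 0) T with hc | hc
      · calc Metric.infDist (φ t y) A
            ≤ Metric.infDist (φ t x) A + dist (φ t y) (φ t x) :=
              Metric.infDist_le_infDist_add_dist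
          _ ≤ g x + ε/2 := by
              have := hDlt y h2 t hc
              have := hg_le x t
              linarith
      · have : Metric.infDist (φ t y) A < ε/4 := by
          rw [hφ_max t y]
          exact hN y h1 _ (le_of_lt hc)
        have := hg_nonneg x
        linarith
    have hub2 : g x ≤ g y + ε/2 := by
      refine ciSup_le fun t => ?_
      rcases le_or_gt (max t 0) T with hc | hc
      · calc Metric.infDist (φ t x) A
            ≤ Metric.infDist (φ t y) A + dist (φ t x) (φ t y) :=
              Metric.infDist_le_infDist_add_dist
          _ ≤ g y + ε/2 := by
              have h3 := hDlt y h2 t hc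
              have := hg_le y t
              rw [dist_comm] at h3
              linarith
      · have : Metric.infDist (φ t x) A < ε/4 := by
          rw [hφ_max t x]
          exact hN x hxN _ (le_of_lt hc)
        have := hg_nonneg y
        linarith
    rw [Real.dist_eq, abs_sub_lt_iff]
    constructor <;> linarith
  have hg_leM : ∀ x, g x ≤ M := fun x => ciSup_le fun t => hM _
  have hM0 : 0 ≤ M := le_trans (hg_nonneg a₀) (hg_leM a₀)
  have hg_anti : ∀ x, ∀ t u : ℝ, t ≤ u → g (φ u x) ≤ g (φ t x) := by
    intro x t u htu
    rw [hφ_max u, hφ_max t]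
    have h1 : (0:ℝ) ≤ max t 0 := le_max_right _ _
    have h2 : max t 0 ≤ max u 0 := max_le_max htu le_rfl
    have : φ (max u 0) x = φ (max u 0 - max t 0) (φ (max t 0) x) := by
      rw [← hφ_add _ _ (by linarith) h1, sub_add_cancel]
    rw [this]
    exact hg_mono _ _ (by linarith)
  -- integrability of the exponential weight
  have hexp_int : IntegrableOn (fun t : ℝ => Real.exp (-t)) (Ioi 0) := by
    have := exp_neg_integrableOn_Ioi 0 one_pos
    simpa using this
  -- the Lyapunov function G
  set G : S → ℝ := fun x => ∫ t in Ioi (0:ℝ), Real.exp (-t) * g (φ t x) with hGdef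
  have horbit_cont : ∀ x ∈ B, Continuous fun t : ℝ => g (φ t x) := by
    intro x hx
    refine continuous_iff_continuousAt.2 fun t => ?_
    have hmem : φ t x ∈ B := by rw [hφ_max]; exact hB_inv x hx _ (le_max_right _ _)
    exact ContinuousAt.comp (f := fun u : ℝ => φ u x) (x := t)
      (hg_cont _ hmem) ((hφcx x).continuousAt)
  have hGint : ∀ x ∈ B, IntegrableOn (fun t : ℝ => Real.exp (-t) * g (φ t x)) (Ioi 0) := by
    intro x hx
    refine Integrable.mono' (hexp_int.const_mul M) ?_ ?_
    · exact (((Real.continuous_exp.comp continuous_neg).mul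
        (horbit_cont x hx)).aestronglyMeasurable)
    · filter_upwards [] with t
      rw [Real.norm_eq_abs, abs_mul, abs_of_pos (Real.exp_pos _),
        abs_of_nonneg (hg_nonneg _), mul_comm M]
      exact mul_le_mul_of_nonneg_left (hg_leM _) (Real.exp_pos _).le
  have hG_cont : ∀ x ∈ B, ContinuousAt G x := by
    intro x hx
    refine continuousAt_of_dominated (F := fun y t => Real.exp (-t) * g (φ t y))
      (bound := fun t => M * Real.exp (-t)) ?_ ?_ ((hexp_int.const_mul M)) ?_
    · filter_upwards [hB_open.mem_nhds hx] with y hy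
      exact (hGint y hy).aestronglyMeasurable
    · filter_upwards [] with y
      filter_upwards [] with t
      rw [Real.norm_eq_abs, abs_mul, abs_of_pos (Real.exp_pos _),
        abs_of_nonneg (hg_nonneg _), mul_comm M]
      exact mul_le_mul_of_nonneg_left (hg_leM _) (Real.exp_pos _).le
    · filter_upwards [ae_restrict_mem measurableSet_Ioi] with t ht
      have hmem : φ t x ∈ B := hB_inv x hx t (le_of_lt ht)
      have : ContinuousAt (g ∘ (φ t)) x := (hg_cont _ hmem).comp (hφc1 t).continuousAt
      exact continuousAt_const.mul this
  have hGA : ∀ a ∈ A, G a = 0 := by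
    intro a ha
    have : (fun t : ℝ => Real.exp (-t) * g (φ t a)) = fun _ => (0:ℝ) := by
      funext t
      rw [hφ_max, hgA _ (hA_inv a ha _ (le_max_right t 0)), mul_zero]
    rw [hGdef]
    simp only [this, integral_zero]
  have hG_nonneg : ∀ x, 0 ≤ G x := by
    intro x
    refine integral_nonneg fun t => ?_
    exact mul_nonneg (Real.exp_pos _).le (hg_nonneg _)
  have hG_le_g : ∀ x ∈ B, G x ≤ g x := by
    intro x hx
    have h1 : G x ≤ ∫ t in Ioi (0:ℝ), Real.exp (-t) * g x := by
      refine setIntegral_mono_on (hGint x hx) (hexp_int.mul_const (g x))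
        measurableSet_Ioi fun t ht => ?_
      have : g (φ t x) ≤ g x := by
        have := hg_anti x 0 t (le_of_lt ht)
        rwa [hφ0] at this
      exact mul_le_mul_of_nonneg_left this (Real.exp_pos _).le
    calc G x ≤ ∫ t in Ioi (0:ℝ), Real.exp (-t) * g x := h1
      _ = (∫ t in Ioi (0:ℝ), Real.exp (-t)) * g x := by rw [integral_mul_const]
      _ = g x := by rw [integral_exp_neg_Ioi_zero, one_mul]
  -- shift formula and integrability of the shifted integrand
  have hshift_int : ∀ x ∈ B, ∀ s : ℝ, 0 ≤ s →
      IntegrableOn (fun t : ℝ => Real.exp (-t) * g (φ (t + s) x)) (Ioi 0) := by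
    intro x hx s hs
    refine (hGint _ (hB_inv x hx s hs)).congr_fun (fun t ht => ?_) measurableSet_Ioi
    rw [hφ_add t s (le_of_lt ht) hs]
  have hG_shift : ∀ x ∈ B, ∀ s : ℝ, 0 ≤ s →
      G (φ s x) = ∫ t in Ioi (0:ℝ), Real.exp (-t) * g (φ (t + s) x) := by
    intro x hx s hs
    rw [hGdef]
    refine setIntegral_congr_fun measurableSet_Ioi fun t ht => ?_
    rw [hφ_add t s (le_of_lt ht) hs]
  -- positivity of weighted integrals
  have hIpos : ∀ w : ℝ → ℝ, IntegrableOn (fun t : ℝ => Real.exp (-t) * w t) (Ioi 0) →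
      (∀ t, 0 ≤ w t) → ∀ t₀ : ℝ, 0 ≤ t₀ → ContinuousAt w t₀ → 0 < w t₀ →
      0 < ∫ t in Ioi (0:ℝ), Real.exp (-t) * w t := by
    intro w hint hnn t₀ ht₀ hcont hpos
    obtain ⟨δ, hδ, hδ'⟩ := Metric.continuousAt_iff.1 hcont (w t₀ / 2) (by linarith)
    set a := t₀ + δ/4 with hadef
    set b := t₀ + δ/2 with hbdef
    have hab : a < b := by rw [hadef, hbdef]; linarith
    have ha0 : 0 < a := by rw [hadef]; linarith
    have hlow : ∀ t ∈ Icc a b, w t₀ / 2 ≤ w t := by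
      intro t ⟨h1, h2⟩
      have : dist t t₀ < δ := by
        rw [Real.dist_eq, abs_of_nonneg (by rw [hadef] at h1; linarith)]
        rw [hbdef] at h2; linarith
      have := hδ' this
      rw [Real.dist_eq, abs_sub_lt_iff] at this
      linarith [this.2]
    have key1 : (0:ℝ) < (b - a) * (Real.exp (-b) * (w t₀ / 2)) := by
      have := Real.exp_pos (-b)
      have : 0 < Real.exp (-b) * (w t₀ / 2) := by positivity
      have hba : 0 < b - a := by linarith
      positivity
    have key2 : (b - a) * (Real.exp (-b) * (w t₀ / 2)) ≤
        ∫ t in Icc a b, Real.exp (-t) * w t := by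
      have hconst : ∫ t in Icc a b, (Real.exp (-b) * (w t₀ / 2)) =
          (b - a) * (Real.exp (-b) * (w t₀ / 2)) := by
        rw [setIntegral_const, Real.volume_real_Icc_of_le hab.le, smul_eq_mul]
      rw [← hconst]
      refine setIntegral_mono_on (integrableOn_const measure_Icc_lt_top.ne)
        (hint.mono_set fun t ht => lt_of_lt_of_le ha0 ht.1) measurableSet_Icc
        fun t ht => ?_
      refine mul_le_mul (Real.exp_le_exp.2 (by linarith [ht.2])) (hlow t ht)
        (by linarith [hpos]) (Real.exp_pos _).le
    have key3 : ∫ t in Icc a b, Real.exp (-t) * w t ≤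
        ∫ t in Ioi (0:ℝ), Real.exp (-t) * w t := by
      refine setIntegral_mono_set hint ?_ ?_
      · filter_upwards [] with t
        exact mul_nonneg (Real.exp_pos _).le (hnn t)
      · exact HasSubset.Subset.eventuallyLE fun t ht => lt_of_lt_of_le ha0 ht.1
    linarith
  have hG_strict : ∀ x ∈ B, x ∉ A → ∀ s : ℝ, 0 < s → G (φ s x) < G x := by
    intro x hx hxA s hs
    set d : ℝ → ℝ := fun t => g (φ t x) - g (φ (t + s) x) with hddef
    have hd_nn : ∀ t, 0 ≤ d t := fun t => sub_nonneg.2 (hg_anti x t (t + s) (by linarith))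
    have hd_cont : Continuous d := by
      refine Continuous.sub (horbit_cont x hx) ?_
      exact Continuous.comp (f := fun t : ℝ => t + s) (horbit_cont x hx)
        (continuous_add_right s)
    have hEx : ∃ t₀ : ℝ, 0 ≤ t₀ ∧ 0 < d t₀ := by
      by_contra hcon
      push_neg at hcon
      have hdz : ∀ t : ℝ, 0 ≤ t → g (φ (t + s) x) = g (φ t x) := by
        intro t ht
        have h1 := hd_nn t
        have h2 := hcon t ht
        simp only [hddef] at h1 h2
        linarith
      have hns : ∀ n : ℕ, g (φ ((n : ℝ) * s) x) = g x := by
        intro n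
        induction n with
        | zero => simp [hφ0]
        | succ n ih =>
          have h1 : ((n + 1 : ℕ) : ℝ) * s = (n : ℝ) * s + s := by push_cast; ring
          rw [h1, hdz _ (by positivity)]
          exact ih
      have hgx0' : g x = 0 := by
        by_contra hne
        have hgp : 0 < g x := lt_of_le_of_ne (hg_nonneg x) (Ne.symm hne)
        obtain ⟨T, hT0, hT⟩ := hg_tail x hx (g x / 2) (by linarith)
        obtain ⟨n, hn⟩ := exists_nat_ge (T / s)
        have hTn : T ≤ (n : ℝ) * s := by
          rw [div_le_iff₀ hs] at hn
          linarith
        have := hT _ hTn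
        rw [hns n] at this
        linarith
      exact hxA (hgx0 x hgx0')
    obtain ⟨t₀, ht₀, hdt₀⟩ := hEx
    have hsub_int := hshift_int x hx s hs.le
    have hd_int : IntegrableOn (fun t : ℝ => Real.exp (-t) * d t) (Ioi 0) := by
      have h5 : IntegrableOn (fun t : ℝ => Real.exp (-t) * g (φ t x)
          - Real.exp (-t) * g (φ (t + s) x)) (Ioi 0) := (hGint x hx).sub hsub_int
      refine IntegrableOn.congr_fun h5 (fun t _ => ?_) measurableSet_Ioi
      simp only [hddef]; ring
    have heq : G x - G (φ s x) = ∫ t in Ioi (0:ℝ), Real.exp (-t) * d t := by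
      rw [hG_shift x hx s hs.le, hGdef, ← integral_sub (hGint x hx) hsub_int]
      refine setIntegral_congr_fun measurableSet_Ioi fun t ht => ?_
      simp only [hddef]; ring
    have hpos := hIpos d hd_int hd_nn t₀ ht₀ hd_cont.continuousAt hdt₀
    linarith
  have hG_pos : ∀ y ∈ B, y ∉ A → 0 < G y := by
    intro y hy hyA
    have hgp : 0 < g y := by
      rcases lt_or_eq_of_le (hg_nonneg y) with h | h
      · exact h
      · exact absurd (hgx0 y h.symm) hyA
    have h0 : 0 < g (φ 0 y) := by rw [hφ0]; exact hgp
    exact hIpos (fun t => g (φ t y)) (hGint y hy) (fun t => hg_nonneg _) 0 le_rfl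
      (horbit_cont y hy).continuousAt h0
  -- construction of the compact neighborhood V
  obtain ⟨ε₀, hε₀, hK₀sub⟩ := hA.exists_cthickening_subset_open hB_open hA_sub_B
  set K₀ : Set S := Metric.cthickening ε₀ A with hK₀def
  have hK₀closed : IsClosed K₀ := Metric.isClosed_cthickening
  have hK₀B : K₀ ⊆ B := hK₀sub
  have hmemK : ∀ y : S, Metric.infDist y A ≤ ε₀ → y ∈ K₀ := by
    intro y hy
    rw [hK₀def, Metric.mem_cthickening_iff,
      ENNReal.le_ofReal_iff_toReal_le (Metric.infEdist_ne_top ⟨a₀, ha₀⟩) hε₀.le]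
    exact hy
  have hgB_contOn : ∀ s' : Set S, s' ⊆ B → ContinuousOn g s' :=
    fun s' hs' y hy => (hg_cont y (hs' hy)).continuousWithinAt
  have hGB_contOn : ∀ s' : Set S, s' ⊆ B → ContinuousOn G s' :=
    fun s' hs' y hy => (hG_cont y (hs' hy)).continuousWithinAt
  set C : Set S := K₀ ∩ g ⁻¹' Ici (ε₀/2) with hCdef
  have hCcomp : IsCompact C :=
    (ContinuousOn.preimage_isClosed_of_isClosed (hgB_contOn K₀ hK₀B)
      hK₀closed isClosed_Ici).isCompact
  obtain ⟨c, hc_pos, hc_lt⟩ : ∃ c : ℝ, 0 < c ∧ ∀ y ∈ C, c < G y := by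
    rcases C.eq_empty_or_nonempty with hCe | hCne
    · exact ⟨1, one_pos, by rw [hCe]; simp⟩
    · obtain ⟨y₀, hy₀C, hy₀min⟩ := hCcomp.exists_isMinOn hCne
        (hGB_contOn C (fun y hy => hK₀B hy.1))
      have hy₀A : y₀ ∉ A := by
        intro hmem
        have h1 := hgA y₀ hmem
        have h2 := hy₀C.2
        simp only [mem_preimage, mem_Ici] at h2
        linarith
      have hy₀pos : 0 < G y₀ := hG_pos y₀ (hK₀B hy₀C.1) hy₀A
      refine ⟨G y₀ / 2, by linarith, fun y hy => ?_⟩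
      have := isMinOn_iff.1 hy₀min y hy
      linarith
  set V : Set S := (K₀ ∩ g ⁻¹' Iic (ε₀/2)) ∩ G ⁻¹' Iic c with hVdef
  have hV_sub_K₀ : V ⊆ K₀ := fun y hy => hy.1.1
  have hV_sub_B : V ⊆ B := fun y hy => hK₀B hy.1.1
  have hV_closed : IsClosed V := by
    refine ContinuousOn.preimage_isClosed_of_isClosed
      (hGB_contOn _ (fun y hy => hK₀B hy.1)) ?_ isClosed_Iic
    exact ContinuousOn.preimage_isClosed_of_isClosed (hgB_contOn K₀ hK₀B)
      hK₀closed isClosed_Iic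
  have hV_comp : IsCompact V := hV_closed.isCompact
  set O : Set S := (B ∩ g ⁻¹' Iio (ε₀/2)) ∩ (B ∩ G ⁻¹' Iio c) with hOdef
  have hO_open : IsOpen O :=
    ((hgB_contOn B subset_rfl).isOpen_inter_preimage hB_open isOpen_Iio).inter
      ((hGB_contOn B subset_rfl).isOpen_inter_preimage hB_open isOpen_Iio)
  have hO_sub_V : O ⊆ V := by
    rintro y ⟨⟨hyB, hyg⟩, -, hyG⟩
    simp only [mem_preimage, mem_Iio] at hyg hyG
    refine ⟨⟨hmemK y ?_, ?_⟩, ?_⟩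
    · linarith [hg_le0 y]
    · simp only [mem_preimage, mem_Iic]; linarith
    · simp only [mem_preimage, mem_Iic]; linarith
  have hA_sub_O : A ⊆ O := by
    intro a ha
    have h1 := hgA a ha
    have h2 := hGA a ha
    refine ⟨⟨hA_sub_B ha, ?_⟩, hA_sub_B ha, ?_⟩
    · simp only [mem_preimage, mem_Iio]; linarith
    · simp only [mem_preimage, mem_Iio]; linarith
  have hO_sub_intV : O ⊆ interior V := interior_maximal hO_sub_V hO_open
  have hA_sub_intV : A ⊆ interior V := fun a ha => hO_sub_intV (hA_sub_O ha)
  -- strict forward invariance of V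
  have hV_strict : ∀ t : ℝ, 0 < t → ∀ x ∈ V, φ t x ∈ O := by
    intro t ht x hxV
    obtain ⟨⟨hxK₀, hxg⟩, hxG⟩ := hxV
    simp only [mem_preimage, mem_Iic] at hxg hxG
    have hxB : x ∈ B := hK₀B hxK₀
    by_cases hxA : x ∈ A
    · exact hA_sub_O (hA_inv x hxA t ht.le)
    · have hφB : φ t x ∈ B := hB_inv x hxB t ht.le
      have hGlt : G (φ t x) < c := lt_of_lt_of_le (hG_strict x hxB hxA t ht) hxG
      have hgle : g (φ t x) ≤ ε₀/2 := le_trans (hg_mono x t ht.le) hxg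
      have hφK₀ : φ t x ∈ K₀ := hmemK _ (by linarith [hg_le0 (φ t x)])
      have hnotC : φ t x ∉ C := fun hmem => absurd hGlt (not_lt.2 (hc_lt _ hmem).le)
      have hglt : g (φ t x) < ε₀/2 := by
        by_contra hcon
        exact hnotC ⟨hφK₀, by simp only [mem_preimage, mem_Ici]; linarith⟩
      exact ⟨⟨hφB, by simp only [mem_preimage, mem_Iio]; exact hglt⟩,
        hφB, by simp only [mem_preimage, mem_Iio]; exact hGlt⟩
  have hV_int : ∀ t : ℝ, 0 < t → ∀ x ∈ V, φ t x ∈ interior V :=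
    fun t ht x hx => hO_sub_intV (hV_strict t ht x hx)
  -- every orbit from B hits V
  have hhits : ∀ x ∈ B, ∃ T : ℝ, 0 ≤ T ∧ φ T x ∈ V := by
    intro x hx
    obtain ⟨T, hT0, hT⟩ := hg_tail x hx (min (ε₀/2) c)
      (lt_min (by linarith) hc_pos)
    have h1 : g (φ T x) ≤ ε₀/2 := le_trans (hT T le_rfl) (min_le_left _ _)
    have h2 : G (φ T x) ≤ c := le_trans (hG_le_g _ (hB_inv x hx T hT0))
      (le_trans (hT T le_rfl) (min_le_right _ _))
    exact ⟨T, hT0, ⟨hmemK _ (by linarith [hg_le0 (φ T x)]), h1⟩, h2⟩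
  -- the entry time into V
  set τ : S → ℝ := fun x => sInf {t : ℝ | 0 ≤ t ∧ φ t x ∈ V} with hτdef
  have hSclosed : ∀ x : S, IsClosed {t : ℝ | 0 ≤ t ∧ φ t x ∈ V} := by
    intro x
    have : {t : ℝ | 0 ≤ t ∧ φ t x ∈ V} = Ici 0 ∩ (fun t => φ t x) ⁻¹' V := rfl
    rw [this]
    exact isClosed_Ici.inter (hV_closed.preimage (hφcx x))
  have hbdd : ∀ x : S, BddBelow {t : ℝ | 0 ≤ t ∧ φ t x ∈ V} :=
    fun x => ⟨0, fun t ht => ht.1⟩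
  have hne : ∀ x ∈ B, {t : ℝ | 0 ≤ t ∧ φ t x ∈ V}.Nonempty := by
    intro x hx
    obtain ⟨T, hT0, hTV⟩ := hhits x hx
    exact ⟨T, hT0, hTV⟩
  have hτ_mem : ∀ x ∈ B, 0 ≤ τ x ∧ φ (τ x) x ∈ V :=
    fun x hx => (hSclosed x).csInf_mem (hne x hx) (hbdd x)
  have hτ_zero : ∀ x ∈ V, τ x = 0 := by
    intro x hx
    have h0mem : (0:ℝ) ∈ {t : ℝ | 0 ≤ t ∧ φ t x ∈ V} := ⟨le_rfl, by rw [hφ0]; exact hx⟩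
    exact le_antisymm (csInf_le (hbdd x) h0mem) (le_csInf ⟨0, h0mem⟩ fun t ht => ht.1)
  have hτ_lb : ∀ x ∈ B, ∀ t : ℝ, 0 ≤ t → t < τ x → φ t x ∉ V := by
    intro x hx t ht0 htτ hmem
    exact absurd (csInf_le (hbdd x) ⟨ht0, hmem⟩) (not_le.2 htτ)
  -- continuity of the entry time on B
  have hτ_cont : ∀ x ∈ B, ContinuousAt τ x := by
    intro x hx
    rw [ContinuousAt, Metric.tendsto_nhds]
    intro ε hε
    obtain ⟨hτx0, hτxV⟩ := hτ_mem x hx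
    have h1 : φ (τ x + ε/2) x ∈ interior V := by
      have heq : φ (τ x + ε/2) x = φ (ε/2) (φ (τ x) x) := by
        rw [add_comm, hφ_add (ε/2) (τ x) (by linarith) hτx0]
      rw [heq]
      exact hV_int (ε/2) (by linarith) _ hτxV
    set N₁ := (fun y : S => φ (τ x + ε/2) y) ⁻¹' interior V with hN₁def
    have hN₁o : IsOpen N₁ := isOpen_interior.preimage (hφc1 _)
    have hxN₁ : x ∈ N₁ := h1
    rcases lt_or_ge (τ x) (ε/2) with hcase | hcase
    · filter_upwards [hN₁o.mem_nhds hxN₁, hB_open.mem_nhds hx] with y hy hyB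
      have hub : τ y ≤ τ x + ε/2 :=
        csInf_le (hbdd y) ⟨by linarith, interior_subset hy⟩
      have hlb : 0 ≤ τ y := (hτ_mem y hyB).1
      rw [Real.dist_eq, abs_sub_lt_iff]
      constructor <;> linarith
    · set T' := τ x - ε/2 with hT'def
      have hT'0 : (0:ℝ) ≤ T' := by rw [hT'def]; linarith
      have hsub : Icc (0:ℝ) T' ×ˢ ({x} : Set S) ⊆
          (fun p : ℝ × S => φ p.1 p.2) ⁻¹' Vᶜ := by
        rintro ⟨t, y⟩ ⟨⟨ht0, htT⟩, hy⟩
        simp only [mem_singleton_iff] at hy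
        subst hy
        simp only [mem_preimage, mem_compl_iff]
        refine hτ_lb _ hx t ht0 ?_
        rw [hT'def] at htT
        linarith
      obtain ⟨u, v, huo, hvo, hsu, htv, huv⟩ := generalized_tube_lemma isCompact_Icc
        isCompact_singleton (hV_closed.isOpen_compl.preimage hφ_cont) hsub
      filter_upwards [hN₁o.mem_nhds hxN₁, hvo.mem_nhds (htv rfl),
        hB_open.mem_nhds hx] with y hy hyv hyB
      have hub : τ y ≤ τ x + ε/2 :=
        csInf_le (hbdd y) ⟨by linarith, interior_subset hy⟩
      have hlb : T' ≤ τ y := by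
        refine le_csInf (hne y hyB) fun t ht => ?_
        by_contra hcon
        push_neg at hcon
        have hmem : (t, y) ∈ u ×ˢ v := ⟨hsu ⟨ht.1, hcon.le⟩, hyv⟩
        exact (huv hmem) ht.2
      rw [hT'def] at hlb
      rw [Real.dist_eq, abs_sub_lt_iff]
      constructor <;> linarith
  -- conclusion
  refine ⟨V, hV_comp, hA_sub_intV, hV_sub_B, ?_, fun s x => φ (s * τ x) x,
    ?_, ?_, ?_, ?_, ?_⟩
  · intro t ht x hxV
    rw [← hφ_eq t ht.le]
    exact hV_int t ht x hxV
  · have hτpart : ContinuousOn (fun p : ℝ × S => τ p.2) (Icc (0:ℝ) 1 ×ˢ B) := by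
      intro p hp
      exact (ContinuousAt.comp (hτ_cont p.2 hp.2) continuousAt_snd).continuousWithinAt
    exact hφ_cont.comp_continuousOn
      (((continuous_fst.continuousOn).mul hτpart).prodMk (continuous_snd.continuousOn))
  · intro s hs x hx
    exact hB_inv x hx _ (mul_nonneg hs.1 (hτ_mem x hx).1)
  · intro x hx
    show φ (0 * τ x) x = x
    rw [zero_mul, hφ0]
  · intro x hx
    show φ (1 * τ x) x ∈ V
    rw [one_mul]
    exact (hτ_mem x hx).2
  · intro s hs x hxV
    show φ (s * τ x) x = x
    rw [hτ_zero x hxV, mul_zero, hφ0]
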